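/- Suppose a normal mode transformation exists, i.e. there are a 2N×2N complex matrix T and positive real numbers μ₁, …, μ_N with Tᴴ R T = Σ, T = Γ T̄ Γ, and T⁻¹ D T = diag(μ₁, …, μ_N, −μ₁, …, −μ_N). Then Ω is positive definite. -/

import Mathlib

open Matrix ComplexOrder

lemma posdef_conj_aux {n : Type*} [Fintype n] [DecidableEq n]
    {A B : Matrix n n ℂ} (hA : A.PosDef) (hB : IsUnit B.det) :
    (Bᴴ * A * B).PosDef := by
  exact hA.conjTranspose_mul_mul_same
    (Matrix.mulVec_injective_iff_isUnit.2 ((Matrix.isUnit_iff_isUnit_det B).2 hB))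

/-- if a normal mode transformation exists then `Ω` is positive definite. -/
theorem stmt_12 {N : ℕ} (hN : 0 < N)
    (R Ω : Matrix (Fin N ⊕ Fin N) (Fin N ⊕ Fin N) ℂ)
    (hR : R.IsHermitian) (hΩ : Ω.IsHermitian)
    (Γ Sig : Matrix (Fin N ⊕ Fin N) (Fin N ⊕ Fin N) ℂ)
    (hΓ : Γ = Matrix.fromBlocks 0 1 1 0)
    (hSig : Sig = Matrix.fromBlocks 1 0 0 (-1))
    (hRconj : Γ * R.map (starRingEnd ℂ) * Γ = -R)
    (hΩconj : Γ * Ω.map (starRingEnd ℂ) * Γ = Ω)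
    (hRunit : IsUnit R.det)
    (D : Matrix (Fin N ⊕ Fin N) (Fin N ⊕ Fin N) ℂ) (hD : D = R⁻¹ * Ω)
    (T : Matrix (Fin N ⊕ Fin N) (Fin N ⊕ Fin N) ℂ) (μ : Fin N → ℝ)
    (hμpos : ∀ i, 0 < μ i)
    (hT1 : Tᴴ * R * T = Sig)
    (hT2 : T = Γ * T.map (starRingEnd ℂ) * Γ)
    (hT3 : T⁻¹ * D * T
      = Matrix.diagonal (Sum.elim (fun i => (μ i : ℂ)) fun i => -(μ i : ℂ))) :
    Ω.PosDef := by
  -- Sig is invertible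
  have hSig2 : Sig * Sig = 1 := by
    rw [hSig]
    simp [Matrix.fromBlocks_multiply, ← Matrix.fromBlocks_one]
  have hSigUnit : IsUnit Sig.det := by
    refine IsUnit.of_mul_eq_one Sig.det ?_
    rw [← Matrix.det_mul, hSig2, Matrix.det_one]
  -- T is invertible
  have hTunit : IsUnit T.det := by
    have := hT1 ▸ hSigUnit
    rw [Matrix.det_mul, Matrix.det_mul] at this
    exact (IsUnit.mul_iff.1 this).2
  have hTHunit : IsUnit Tᴴ.det := by
    rwa [Matrix.det_conjTranspose, isUnit_star]
  set d : (Fin N ⊕ Fin N) → ℂ :=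
    Sum.elim (fun i => (μ i : ℂ)) fun i => -(μ i : ℂ) with hd'
  -- Ω = R * D
  have hΩRD : Ω = R * D := by
    rw [hD, Matrix.mul_nonsing_inv_cancel_left _ _ hRunit]
  -- D = T * diag * T⁻¹
  have hDdiag : D * T = T * Matrix.diagonal d := by
    have := congrArg (fun M => T * M) hT3
    simpa [← Matrix.mul_assoc, Matrix.mul_nonsing_inv_cancel_left _ _ hTunit] using this
  have hDeq : D = T * Matrix.diagonal d * T⁻¹ := by
    rw [← hDdiag, Matrix.mul_nonsing_inv_cancel_right _ _ hTunit]
  -- (T⁻¹)ᴴ * Sig = R * T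
  have hkey : (T⁻¹)ᴴ * Sig = R * T := by
    rw [← hT1, Matrix.conjTranspose_nonsing_inv, ← Matrix.mul_assoc, ← Matrix.mul_assoc,
      Matrix.nonsing_inv_mul _ hTHunit, Matrix.one_mul]
  -- Sig * diagonal d = diagonal (μ, μ)
  have hSd : Sig * Matrix.diagonal d =
      Matrix.diagonal (Sum.elim (fun i => (μ i : ℂ)) fun i => (μ i : ℂ)) := by
    rw [hd', hSig, ← Matrix.fromBlocks_diagonal, ← Matrix.fromBlocks_diagonal,
      Matrix.fromBlocks_multiply]
    simp [Matrix.diagonal_neg]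
  -- Ω = (T⁻¹)ᴴ * diagonal (μ,μ) * T⁻¹
  have hΩeq : Ω = (T⁻¹)ᴴ *
      Matrix.diagonal (Sum.elim (fun i => (μ i : ℂ)) fun i => (μ i : ℂ)) * T⁻¹ := by
    rw [← hSd, ← Matrix.mul_assoc, hkey, hΩRD, hDeq]
    simp only [Matrix.mul_assoc]
  have hPD : (Matrix.diagonal
      (Sum.elim (fun i => (μ i : ℂ)) fun i => (μ i : ℂ))).PosDef := by
    refine Matrix.PosDef.diagonal fun i => ?_
    rcases i with i | i <;> simp only [Sum.elim_inl, Sum.elim_inr] <;> exact_mod_cast hμpos i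
  have hTinv : IsUnit (T⁻¹).det := T.isUnit_nonsing_inv_det hTunit
  rw [hΩeq]
  exact posdef_conj_aux hPD hTinv
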